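/- Let θ ∈ (0,π/2) and let K be a capillary convex body. Then the capillary inner radius and the classical inner radius of K satisfy (1 − cos θ)·ρ_−(K,θ) ≤ ρ_−(K) ≤ sin θ·ρ_−(K,θ). -/
import Mathlib


open MeasureTheory Real Set Filter
open scoped RealInnerProductSpace

noncomputable section

/-- Ambient Euclidean space `ℝ^{n+1}`. -/
abbrev Amb (n : ℕ) : Type := EuclideanSpace ℝ (Fin (n + 1))

/-- The `(n+1)`-st standard basis vector `E_{n+1}`. -/
def lastBasis (n : ℕ) : Amb n := EuclideanSpace.single (Fin.last n) 1

/-- The vector `e := -E_{n+1}`. -/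
def eVec (n : ℕ) : Amb n := -(lastBasis n)

/-- The closed upper half-space `\overline{ℝ^{n+1}_+}`. -/
def upperHalf (n : ℕ) : Set (Amb n) := {x | 0 ≤ x (Fin.last n)}

/-- The boundary hyperplane `∂ℝ^{n+1}_+`. -/
def hyperplane (n : ℕ) : Set (Amb n) := {x | x (Fin.last n) = 0}

/-- `ℓ(x) := sin²θ + cos θ · ⟨x, e⟩`. -/
def ell (n : ℕ) (θ : ℝ) (x : Amb n) : ℝ := sin θ ^ 2 + cos θ * ⟪x, eVec n⟫

/-- The unit spherical cap `C_θ`. -/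
def capSphere (n : ℕ) (θ : ℝ) : Set (Amb n) :=
  {ξ | ξ ∈ upperHalf n ∧ ‖ξ - cos θ • eVec n‖ = 1}

/-- The unit spherical cap body `Ĉ_θ`. -/
def capBodyUnit (n : ℕ) (θ : ℝ) : Set (Amb n) :=
  {x | x ∈ upperHalf n ∧ ‖x - cos θ • eVec n‖ ≤ 1}

/-- A capillary convex body: a compact convex subset of the closed upper half-space with
nonempty interior, whose flat part `K_f` has nonempty interior relative to the boundary
hyperplane and whose curved boundary `K_u` is nonempty. -/
structure IsCapillaryBody (n : ℕ) (K : Set (Amb n)) : Prop where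
  compact : IsCompact K
  convex : Convex ℝ K
  subset_upper : K ⊆ upperHalf n
  interior_nonempty : (interior K).Nonempty
  flat_relint_nonempty : (intrinsicInterior ℝ (K ∩ hyperplane n)).Nonempty
  curved_nonempty : (frontier K ∩ {x | 0 < x (Fin.last n)}).Nonempty

/-- Normal cone (of unit normal vectors) of `K` at `x`. -/
def normalCone (n : ℕ) (K : Set (Amb n)) (x : Amb n) : Set (Amb n) :=
  {ζ | ‖ζ‖ = 1 ∧ ∀ y ∈ K, ⟪ζ, y - x⟫ ≤ 0}

/-- A `θ`-capillary convex body: a capillary convex body with contact angle at most `θ`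
along the relative boundary of its flat part. -/
def IsThetaCapillary (n : ℕ) (θ : ℝ) (K : Set (Amb n)) : Prop :=
  IsCapillaryBody n K ∧
    ∀ x ∈ intrinsicFrontier ℝ (K ∩ hyperplane n),
      cos θ ≤ sSup ((fun ζ => ⟪ζ, lastBasis n⟫) '' normalCone n K x)

/-- Support function `h_z(ξ) := max_{y ∈ K} ⟨ξ - cos θ · e, y - z⟩`. -/
def suppFn (n : ℕ) (θ : ℝ) (K : Set (Amb n)) (z ξ : Amb n) : ℝ :=
  sSup ((fun y => ⟪ξ - cos θ • eVec n, y - z⟫) '' K)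

/-- Capillary support function `u_z := h_z / ℓ`. -/
def capSupp (n : ℕ) (θ : ℝ) (K : Set (Amb n)) (z ξ : Amb n) : ℝ :=
  suppFn n θ K z ξ / ell n θ ξ

/-- Capillary polar body `K*_z`. -/
def capPolar (n : ℕ) (θ : ℝ) (K : Set (Amb n)) (z : Amb n) : Set (Amb n) :=
  {x | ∃ r : ℝ, 0 ≤ r ∧ ∃ ξ ∈ capSphere n θ, x = z + r • ξ ∧ r * capSupp n θ K z ξ ≤ 1}

/-- Capillary area `ω_θ := ∫_{C_θ} ℓ dσ` of `C_θ` (surface measure = `n`-dimensional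
Hausdorff measure). -/
def omegaTheta (n : ℕ) (θ : ℝ) : ℝ := ∫ ξ in capSphere n θ, ell n θ ξ ∂μH[(n : ℝ)]

/-- `ℰ_θ(K, z) := (1/ω_θ) ∫_{C_θ} log(u_z) ℓ dσ`. -/
def entropyAt (n : ℕ) (θ : ℝ) (K : Set (Amb n)) (z : Amb n) : ℝ :=
  (1 / omegaTheta n θ) *
    ∫ ξ in capSphere n θ, Real.log (capSupp n θ K z ξ) * ell n θ ξ ∂μH[(n : ℝ)]

/-- Capillary entropy `ℰ_θ(K)`: supremum of `ℰ_θ(K, z)` over `z` in the relative interior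
of the flat part `K_f`. -/
def capEntropy (n : ℕ) (θ : ℝ) (K : Set (Amb n)) : ℝ :=
  sSup (entropyAt n θ K '' intrinsicInterior ℝ (K ∩ hyperplane n))

/-- The spherical cap body `Ĉ_{r,θ}(x₀)`. -/
def capBodyAt (n : ℕ) (θ r : ℝ) (x₀ : Amb n) : Set (Amb n) :=
  {x | x ∈ upperHalf n ∧ ‖x - (x₀ + (r * cos θ) • eVec n)‖ ≤ r}

/-- Capillary inner radius `ρ₋(K, θ)`. -/
def capInRadius (n : ℕ) (θ : ℝ) (K : Set (Amb n)) : ℝ :=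
  sSup {r : ℝ | 0 < r ∧ ∃ x₀ ∈ hyperplane n, capBodyAt n θ r x₀ ⊆ K}

/-- Capillary outer radius `ρ₊(K, θ)`. -/
def capOutRadius (n : ℕ) (θ : ℝ) (K : Set (Amb n)) : ℝ :=
  sInf {r : ℝ | 0 < r ∧ ∃ x₀ ∈ hyperplane n, K ⊆ capBodyAt n θ r x₀}

/-- Classical inner radius `ρ₋(K)`. -/
def inRadius (n : ℕ) (K : Set (Amb n)) : ℝ :=
  sSup {ρ : ℝ | 0 < ρ ∧ ∃ x₀ ∈ hyperplane n, Metric.ball x₀ ρ ∩ upperHalf n ⊆ K}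

/-- Classical outer radius `ρ₊(K)`. -/
def outRadius (n : ℕ) (K : Set (Amb n)) : ℝ :=
  sInf {ρ : ℝ | 0 < ρ ∧ ∃ x₀ ∈ hyperplane n, K ⊆ Metric.ball x₀ ρ}

/-- Dual capillary gauge function `F_θ^∘`. -/
def Fdual (n : ℕ) (θ : ℝ) (x : Amb n) : ℝ :=
  (1 / sin θ) *
    (Real.sqrt (‖x‖ ^ 2 + (cos θ / sin θ) ^ 2 * ⟪eVec n, x⟫ ^ 2) -
      (cos θ / sin θ) * ⟪eVec n, x⟫)

/-- Capillary gauge function `F_θ(η) := |η| + cos θ · ⟨e, η⟩`. -/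
def Fgauge (n : ℕ) (θ : ℝ) (η : Amb n) : ℝ := ‖η‖ + cos θ * ⟪eVec n, η⟫

/-- Capillary Cahn–Hoffman map `Ψ(ξ) := (ξ - cos θ · e)/ℓ(ξ)`. -/
def cahnHoffman (n : ℕ) (θ : ℝ) (ξ : Amb n) : Amb n :=
  (ell n θ ξ)⁻¹ • (ξ - cos θ • eVec n)

/-- The ellipsoid portion `D_θ`. -/
def Dtheta (n : ℕ) (θ : ℝ) : Set (Amb n) :=
  {η | Fgauge n θ η = 1 ∧ cos θ / sin θ ^ 2 ≤ ⟪η, lastBasis n⟫}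

/-- Reflection across the boundary hyperplane `∂ℝ^{n+1}_+`. -/
def reflect (n : ℕ) (x : Amb n) : Amb n :=
  x - (2 * ⟪x, lastBasis n⟫) • lastBasis n

/-- Coordinate of `lastBasis` additions. -/
lemma myAux_inner_lastBasis (n : ℕ) (v : Amb n) : ⟪v, lastBasis n⟫ = v (Fin.last n) := by
  simp [lastBasis, EuclideanSpace.inner_single_right]

lemma myAux_norm_lastBasis (n : ℕ) : ‖lastBasis n‖ = 1 := by simp [lastBasis]

lemma myAux_eVec (n : ℕ) (c : ℝ) : c • eVec n = (-c) • lastBasis n := by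
  simp [eVec]

set_option maxHeartbeats 1600000 in
/-- `(1 - cos θ) ρ₋(K, θ) ≤ ρ₋(K) ≤ sin θ · ρ₋(K, θ)` for `θ ∈ (0, π/2)`. -/
theorem stmt_5 (n : ℕ) (hn : 1 ≤ n) (θ : ℝ) (hθ : θ ∈ Set.Ioo 0 (π / 2))
    (K : Set (Amb n)) (hK : IsCapillaryBody n K) :
    (1 - cos θ) * capInRadius n θ K ≤ inRadius n K ∧
    inRadius n K ≤ sin θ * capInRadius n θ K := by
  obtain ⟨hθ0, hθ2⟩ := hθ
  have hπ : (0:ℝ) < π := pi_pos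
  have hs : 0 < sin θ := sin_pos_of_pos_of_lt_pi hθ0 (by linarith)
  have hc0 : 0 < cos θ := cos_pos_of_mem_Ioo ⟨by linarith, hθ2⟩
  have hc1 : cos θ < 1 := by
    have := cos_lt_cos_of_nonneg_of_le_pi (le_refl (0:ℝ)) (by linarith : θ ≤ π) hθ0
    simpa using this
  have h1c : (0:ℝ) < 1 - cos θ := by linarith
  set E := lastBasis n with hEdef
  have hnE : ‖E‖ = 1 := myAux_norm_lastBasis n
  have hElast : E (Fin.last n) = 1 := by
    simp [hEdef, lastBasis, EuclideanSpace.single_apply]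
  -- bound on K
  obtain ⟨C, hC⟩ := Metric.isBounded_iff.mp hK.compact.isBounded
  have hC0 : 0 ≤ C := by
    obtain ⟨x, hx⟩ := hK.interior_nonempty
    have hxK : x ∈ K := interior_subset hx
    have := hC hxK hxK
    simpa using this
  set A := {r : ℝ | 0 < r ∧ ∃ x₀ ∈ hyperplane n, capBodyAt n θ r x₀ ⊆ K} with hAdef
  set B := {ρ : ℝ | 0 < ρ ∧ ∃ x₀ ∈ hyperplane n, Metric.ball x₀ ρ ∩ upperHalf n ⊆ K} with hBdef
  have hcapIn : capInRadius n θ K = sSup A := rfl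
  have hIn : inRadius n K = sSup B := rfl
  -- membership helpers
  have hmemx₀ : ∀ r x₀, 0 < r → x₀ ∈ hyperplane n → x₀ ∈ capBodyAt n θ r x₀ := by
    intro r x₀ hr hx₀
    refine ⟨le_of_eq (show x₀ (Fin.last n) = 0 from hx₀).symm, ?_⟩
    have h1 : x₀ - (x₀ + (r * cos θ) • eVec n) = (r * cos θ) • E := by
      rw [myAux_eVec]; module
    rw [h1, norm_smul, hnE, Real.norm_eq_abs]
    have : |r * cos θ| = r * cos θ := abs_of_nonneg (by positivity)
    rw [this]
    nlinarith
  have hmemtop : ∀ r x₀, 0 < r → x₀ ∈ hyperplane n →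
      x₀ + (r * (1 - cos θ)) • E ∈ capBodyAt n θ r x₀ := by
    intro r x₀ hr hx₀
    have hx₀l : x₀ (Fin.last n) = 0 := hx₀
    constructor
    · show 0 ≤ (x₀ + (r * (1 - cos θ)) • E) (Fin.last n)
      have : (x₀ + (r * (1 - cos θ)) • E) (Fin.last n)
          = x₀ (Fin.last n) + (r * (1 - cos θ)) * E (Fin.last n) := rfl
      rw [this, hx₀l, hElast]
      nlinarith
    · have h1 : x₀ + (r * (1 - cos θ)) • E - (x₀ + (r * cos θ) • eVec n) = r • E := by
        rw [myAux_eVec]; module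
      show ‖x₀ + (r * (1 - cos θ)) • E - (x₀ + (r * cos θ) • eVec n)‖ ≤ r
      rw [h1, norm_smul, hnE, Real.norm_eq_abs, abs_of_nonneg hr.le]
      simp
  -- bddAbove of A and B
  have hAbdd : BddAbove A := by
    refine ⟨C / (1 - cos θ), ?_⟩
    rintro r ⟨hr, x₀, hx₀, hsub⟩
    have h1 := hsub (hmemx₀ r x₀ hr hx₀)
    have h2 := hsub (hmemtop r x₀ hr hx₀)
    have h3 := hC h2 h1
    have h4 : dist (x₀ + (r * (1 - cos θ)) • E) x₀ = r * (1 - cos θ) := by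
      rw [dist_eq_norm]
      have : x₀ + (r * (1 - cos θ)) • E - x₀ = (r * (1 - cos θ)) • E := by module
      rw [this, norm_smul, hnE, Real.norm_eq_abs, abs_of_nonneg (by nlinarith)]
      ring
    rw [h4] at h3
    rw [le_div_iff₀ h1c]
    linarith
  have hBbdd : BddAbove B := by
    refine ⟨2 * C, ?_⟩
    rintro ρ ⟨hρ, x₀, hx₀, hsub⟩
    have hx₀l : x₀ (Fin.last n) = 0 := hx₀
    have h1 : x₀ ∈ K := hsub ⟨by simp [hρ], by simp [upperHalf, hx₀l]⟩
    have h2 : x₀ + (ρ / 2) • E ∈ K := by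
      refine hsub ⟨?_, ?_⟩
      · have : dist (x₀ + (ρ / 2) • E) x₀ = ρ / 2 := by
          rw [dist_eq_norm]
          have h : x₀ + (ρ / 2) • E - x₀ = (ρ / 2) • E := by module
          rw [h, norm_smul, hnE, Real.norm_eq_abs, abs_of_nonneg (by linarith)]; ring
        simp [Metric.mem_ball, this]; linarith
      · show 0 ≤ (x₀ + (ρ / 2) • E) (Fin.last n)
        have : (x₀ + (ρ / 2) • E) (Fin.last n)
            = x₀ (Fin.last n) + (ρ / 2) * E (Fin.last n) := rfl
        rw [this, hx₀l, hElast]; linarith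
    have h3 := hC h2 h1
    have h4 : dist (x₀ + (ρ / 2) • E) x₀ = ρ / 2 := by
      rw [dist_eq_norm]
      have h : x₀ + (ρ / 2) • E - x₀ = (ρ / 2) • E := by module
      rw [h, norm_smul, hnE, Real.norm_eq_abs, abs_of_nonneg (by linarith)]; ring
    rw [h4] at h3
    linarith
  have hBnn : 0 ≤ sSup B := Real.sSup_nonneg (fun x hx => hx.1.le)
  have hAnn : 0 ≤ sSup A := Real.sSup_nonneg (fun x hx => hx.1.le)
  constructor
  · -- (1 - cos θ) * sSup A ≤ sSup B
    rw [hcapIn, hIn]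
    have key : ∀ r ∈ A, (1 - cos θ) * r ∈ B := by
      rintro r ⟨hr, x₀, hx₀, hsub⟩
      refine ⟨by positivity, x₀, hx₀, ?_⟩
      rintro x ⟨hxb, hxu⟩
      apply hsub
      refine ⟨hxu, ?_⟩
      have h1 : x - (x₀ + (r * cos θ) • eVec n) = (x - x₀) + (r * cos θ) • E := by
        rw [myAux_eVec]; module
      show ‖x - (x₀ + (r * cos θ) • eVec n)‖ ≤ r
      rw [h1]
      have h2 : ‖x - x₀‖ < (1 - cos θ) * r := by
        rw [← dist_eq_norm]; exact Metric.mem_ball.mp hxb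
      have h3 : ‖(r * cos θ) • E‖ = r * cos θ := by
        rw [norm_smul, hnE, Real.norm_eq_abs, abs_of_nonneg (by positivity)]; ring
      calc ‖(x - x₀) + (r * cos θ) • E‖ ≤ ‖x - x₀‖ + ‖(r * cos θ) • E‖ := norm_add_le _ _
        _ ≤ r := by rw [h3]; nlinarith
    have hle : sSup A ≤ sSup B / (1 - cos θ) := by
      apply Real.sSup_le _ (by positivity)
      intro r hr
      have := le_csSup hBbdd (key r hr)
      rw [le_div_iff₀ h1c]
      linarith [this]
    calc (1 - cos θ) * sSup A ≤ (1 - cos θ) * (sSup B / (1 - cos θ)) :=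
          mul_le_mul_of_nonneg_left hle h1c.le
      _ = sSup B := by field_simp
  · -- sSup B ≤ sin θ * sSup A
    rw [hcapIn, hIn]
    apply Real.sSup_le _ (by positivity)
    rintro ρ ⟨hρ0, x₀, hx₀, hsub⟩
    have hx₀l : x₀ (Fin.last n) = 0 := hx₀
    have key : ∀ r : ℝ, 0 < r → r * sin θ < ρ → r ∈ A := by
      intro r hr hrs
      refine ⟨hr, x₀, hx₀, ?_⟩
      rintro x ⟨hxu, hxn⟩
      apply hsub
      refine ⟨?_, hxu⟩
      rw [Metric.mem_ball, dist_eq_norm]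
      have h1 : x - (x₀ + (r * cos θ) • eVec n) = (x - x₀) + (r * cos θ) • E := by
        rw [myAux_eVec]; module
      rw [h1] at hxn
      have hvlast : ⟪x - x₀, E⟫ = x (Fin.last n) := by
        rw [hEdef, myAux_inner_lastBasis]
        show x (Fin.last n) - x₀ (Fin.last n) = x (Fin.last n)
        rw [hx₀l]; ring
      have hxl : 0 ≤ x (Fin.last n) := hxu
      have hexp : ‖(x - x₀) + (r * cos θ) • E‖ ^ 2
          = ‖x - x₀‖ ^ 2 + 2 * ((r * cos θ) * ⟪x - x₀, E⟫) + (r * cos θ) ^ 2 := by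
        rw [norm_add_sq_real, real_inner_smul_right, norm_smul, hnE, Real.norm_eq_abs,
          abs_of_nonneg (by positivity : (0:ℝ) ≤ r * cos θ)]
        ring
      have ha0 : (0:ℝ) ≤ ‖(x - x₀) + (r * cos θ) • E‖ := norm_nonneg _
      have hb0 : (0:ℝ) ≤ ‖x - x₀‖ := norm_nonneg _
      rw [hvlast] at hexp
      generalize hg1 : ‖(x - x₀) + (r * cos θ) • E‖ = a at hxn hexp ha0
      generalize hg2 : ‖x - x₀‖ = b at hexp hb0 ⊢
      have hpyth : sin θ ^ 2 + cos θ ^ 2 = 1 := sin_sq_add_cos_sq θ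
      have hts : (r * sin θ) ^ 2 + (r * cos θ) ^ 2 = r ^ 2 := by
        calc (r * sin θ) ^ 2 + (r * cos θ) ^ 2 = r ^ 2 * (sin θ ^ 2 + cos θ ^ 2) := by ring
          _ = r ^ 2 := by rw [hpyth]; ring
      have ha2 : a ^ 2 ≤ r ^ 2 := by nlinarith
      have hb2 : b ^ 2 ≤ (r * sin θ) ^ 2 := by
        nlinarith [mul_nonneg (mul_nonneg hr.le hc0.le) hxl]
      have hb : b ≤ r * sin θ := by
        nlinarith [mul_pos hr hs]
      linarith
    have hratio : ρ / sin θ ≤ sSup A := by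
      apply le_of_forall_lt
      intro c hc
      obtain ⟨r, hr1, hr2⟩ := exists_between
        (show max c 0 < ρ / sin θ by
          rcases le_or_gt c 0 with h | h
          · calc max c 0 = 0 := max_eq_right h
              _ < ρ / sin θ := by positivity
          · calc max c 0 = c := max_eq_left h.le
              _ < ρ / sin θ := hc)
      have hrpos : 0 < r := lt_of_le_of_lt (le_max_right c 0) hr1
      have hrA : r ∈ A := key r hrpos (by
        rw [← lt_div_iff₀ hs]; exact hr2)
      calc c ≤ max c 0 := le_max_left c 0
        _ < r := hr1
        _ ≤ sSup A := le_csSup hAbdd hrA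
    calc ρ = sin θ * (ρ / sin θ) := by field_simp
      _ ≤ sin θ * sSup A := mul_le_mul_of_nonneg_left hratio hs.le

end
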